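/- Let A be an m×n real matrix with nonzero rows, Ā its row-normalized version, and S = {x : Ax = b} nonempty with S ≠ ℝ^n. Define σ(Ā,∞) = inf over x ∉ S of ‖Ā(x - x*)‖_∞/‖x - x*‖ where x* is the projection of x onto S. Then σ(Ā,∞) ≥ max{σ(Ā,2)/√m, σ(A,2)/‖A‖_F, σ(A,∞)/‖A‖_{∞,2}} and σ(Ā,∞) ≤ σ(Ā,2), where σ(·,2) and σ(·,∞) are the Hoffman constants with respect to the Euclidean and max norms respectively, ‖A‖_F is the Frobenius norm, and ‖A‖_{∞,2} is the maximum row norm. -/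

import Mathlib

open scoped RealInnerProductSpace BigOperators

/-- Generic comparison of infima of value sets over the same index predicate. -/
lemma sInf_div_le_sInf_aux {α : Type*} (Q : α → Prop) (f g : α → ℝ) (c : ℝ) (hc : 0 < c)
    (hne : ∃ x, Q x) (hf0 : ∀ x, Q x → 0 ≤ f x) (hfg : ∀ x, Q x → f x ≤ c * g x) :
    sInf {r : ℝ | ∃ x, Q x ∧ r = f x} / c ≤ sInf {r : ℝ | ∃ x, Q x ∧ r = g x} := by
  obtain ⟨x₀, hx₀⟩ := hne
  refine le_csInf ⟨g x₀, ⟨x₀, hx₀, rfl⟩⟩ ?_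
  rintro r ⟨x, hx, rfl⟩
  rw [div_le_iff₀ hc]
  calc sInf {r : ℝ | ∃ x, Q x ∧ r = f x} ≤ f x :=
        csInf_le ⟨0, by rintro r ⟨y, hy, rfl⟩; exact hf0 y hy⟩ ⟨x, hx, rfl⟩
    _ ≤ c * g x := hfg x hx
    _ = g x * c := mul_comm _ _

theorem MD_hoffman_constant_sandwich {m n : ℕ}
    (a : Fin m → EuclideanSpace ℝ (Fin n)) (ha : ∀ i, a i ≠ 0) (b : Fin m → ℝ)
    (P : EuclideanSpace ℝ (Fin n) → EuclideanSpace ℝ (Fin n))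
    (hS : {x : EuclideanSpace ℝ (Fin n) | ∀ i, ⟪a i, x⟫ = b i}.Nonempty)
    (hSne : {x : EuclideanSpace ℝ (Fin n) | ∀ i, ⟪a i, x⟫ = b i} ≠ Set.univ)
    (hP : ∀ x, (∀ i, ⟪a i, P x⟫ = b i) ∧
      ∀ y, (∀ i, ⟪a i, y⟫ = b i) → ‖x - P x‖ ≤ ‖x - y‖) :
    max (max
        (sInf {r : ℝ | ∃ x, (¬ ∀ i, ⟪a i, x⟫ = b i) ∧
          r = Real.sqrt (∑ i, (⟪a i, x - P x⟫ / ‖a i‖) ^ 2) / ‖x - P x‖} / Real.sqrt m)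
        (sInf {r : ℝ | ∃ x, (¬ ∀ i, ⟪a i, x⟫ = b i) ∧
          r = Real.sqrt (∑ i, (⟪a i, x - P x⟫) ^ 2) / ‖x - P x‖} /
            Real.sqrt (∑ i, ‖a i‖ ^ 2)))
        (sInf {r : ℝ | ∃ x, (¬ ∀ i, ⟪a i, x⟫ = b i) ∧
          r = (⨆ i, |⟪a i, x - P x⟫|) / ‖x - P x‖} / (⨆ i, ‖a i‖))
      ≤ sInf {r : ℝ | ∃ x, (¬ ∀ i, ⟪a i, x⟫ = b i) ∧
          r = (⨆ i, |⟪a i, x - P x⟫| / ‖a i‖) / ‖x - P x‖} ∧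
    sInf {r : ℝ | ∃ x, (¬ ∀ i, ⟪a i, x⟫ = b i) ∧
          r = (⨆ i, |⟪a i, x - P x⟫| / ‖a i‖) / ‖x - P x‖}
      ≤ sInf {r : ℝ | ∃ x, (¬ ∀ i, ⟪a i, x⟫ = b i) ∧
          r = Real.sqrt (∑ i, (⟪a i, x - P x⟫ / ‖a i‖) ^ 2) / ‖x - P x‖} := by
  -- there exists a point outside S
  obtain ⟨x₀, hx₀⟩ := (Set.ne_univ_iff_exists_notMem _).mp hSne
  have hx₀' : ¬ ∀ i, ⟪a i, x₀⟫ = b i := hx₀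
  have hne : ∃ x, ¬ ∀ i, ⟪a i, x⟫ = b i := ⟨x₀, hx₀'⟩
  -- Fin m is nonempty
  have hi₀ : ∃ i : Fin m, True := by
    by_contra h
    push_neg at h
    exact hx₀' fun i => (h i).elim
  obtain ⟨i₀, -⟩ := hi₀
  haveI : Nonempty (Fin m) := ⟨i₀⟩
  have hm : (0:ℝ) < m := by exact_mod_cast i₀.pos
  set Q : EuclideanSpace ℝ (Fin n) → Prop := fun x => ¬ ∀ i, ⟪a i, x⟫ = b i with hQ
  -- basic facts for each x with Q x
  have hbdd : ∀ x : EuclideanSpace ℝ (Fin n),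
      BddAbove (Set.range fun i : Fin m => |⟪a i, x - P x⟫| / ‖a i‖) :=
    fun x => Set.Finite.bddAbove (Set.finite_range _)
  have hbdd2 : ∀ x : EuclideanSpace ℝ (Fin n),
      BddAbove (Set.range fun i : Fin m => |⟪a i, x - P x⟫|) :=
    fun x => Set.Finite.bddAbove (Set.finite_range _)
  have hbdda : BddAbove (Set.range fun i : Fin m => ‖a i‖) :=
    Set.Finite.bddAbove (Set.finite_range _)
  -- s x := sup_i |<a i, x - P x>| / ‖a i‖
  set s : EuclideanSpace ℝ (Fin n) → ℝ :=
    fun x => ⨆ i, |⟪a i, x - P x⟫| / ‖a i‖ with hs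
  have hs_le : ∀ x, ∀ i, |⟪a i, x - P x⟫| / ‖a i‖ ≤ s x :=
    fun x i => le_ciSup (hbdd x) i
  have hs0 : ∀ x, 0 ≤ s x :=
    fun x => le_trans (div_nonneg (abs_nonneg _) (norm_nonneg _)) (hs_le x i₀)
  have hu : ∀ x, Q x → (0:ℝ) < ‖x - P x‖ := by
    intro x hx
    rw [norm_pos_iff, sub_ne_zero]
    intro h
    exact hx (h ▸ (hP x).1)
  -- pointwise numerator bounds
  have key1 : ∀ x, Real.sqrt (∑ i, (⟪a i, x - P x⟫ / ‖a i‖) ^ 2)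
      ≤ Real.sqrt m * s x := by
    intro x
    have : Real.sqrt m * s x = Real.sqrt (m * s x ^ 2) := by
      rw [Real.sqrt_mul (le_of_lt hm), Real.sqrt_sq (hs0 x)]
    rw [this]
    apply Real.sqrt_le_sqrt
    calc ∑ i, (⟪a i, x - P x⟫ / ‖a i‖) ^ 2 ≤ ∑ _i : Fin m, s x ^ 2 := by
          apply Finset.sum_le_sum
          intro i _
          have h1 : (⟪a i, x - P x⟫ / ‖a i‖) ^ 2 = (|⟪a i, x - P x⟫| / ‖a i‖) ^ 2 := by
            rw [div_pow, div_pow, sq_abs]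
          rw [h1]
          exact pow_le_pow_left₀ (div_nonneg (abs_nonneg _) (norm_nonneg _)) (hs_le x i) 2
      _ = m * s x ^ 2 := by
          rw [Finset.sum_const, Finset.card_univ, Fintype.card_fin, nsmul_eq_mul]
  have key2 : ∀ x, Real.sqrt (∑ i, (⟪a i, x - P x⟫) ^ 2)
      ≤ Real.sqrt (∑ i, ‖a i‖ ^ 2) * s x := by
    intro x
    have hsum0 : (0:ℝ) ≤ ∑ i, ‖a i‖ ^ 2 :=
      Finset.sum_nonneg fun i _ => sq_nonneg _
    have : Real.sqrt (∑ i, ‖a i‖ ^ 2) * s x = Real.sqrt ((∑ i, ‖a i‖ ^ 2) * s x ^ 2) := by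
      rw [Real.sqrt_mul hsum0, Real.sqrt_sq (hs0 x)]
    rw [this]
    apply Real.sqrt_le_sqrt
    rw [Finset.sum_mul]
    apply Finset.sum_le_sum
    intro i _
    have hai : ‖a i‖ ≠ 0 := norm_ne_zero_iff.mpr (ha i)
    have h1 : (⟪a i, x - P x⟫) ^ 2 = ‖a i‖ ^ 2 * (|⟪a i, x - P x⟫| / ‖a i‖) ^ 2 := by
      rw [div_pow, sq_abs]
      field_simp
    rw [h1]
    exact mul_le_mul_of_nonneg_left
      (pow_le_pow_left₀ (div_nonneg (abs_nonneg _) (norm_nonneg _)) (hs_le x i) 2)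
      (sq_nonneg _)
  have key3 : ∀ x, (⨆ i, |⟪a i, x - P x⟫|) ≤ (⨆ i, ‖a i‖) * s x := by
    intro x
    apply ciSup_le
    intro i
    have hai : ‖a i‖ ≠ 0 := norm_ne_zero_iff.mpr (ha i)
    have h1 : |⟪a i, x - P x⟫| = ‖a i‖ * (|⟪a i, x - P x⟫| / ‖a i‖) := by
      field_simp
    rw [h1]
    exact mul_le_mul (le_ciSup hbdda i) (hs_le x i)
      (div_nonneg (abs_nonneg _) (norm_nonneg _))
      (le_trans (norm_nonneg _) (le_ciSup hbdda i₀))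
  have key4 : ∀ x, s x ≤ Real.sqrt (∑ i, (⟪a i, x - P x⟫ / ‖a i‖) ^ 2) := by
    intro x
    apply ciSup_le
    intro i
    have h1 : |⟪a i, x - P x⟫| / ‖a i‖ = |⟪a i, x - P x⟫ / ‖a i‖| := by
      rw [abs_div, abs_of_nonneg (norm_nonneg _)]
    rw [h1]
    exact Real.abs_le_sqrt
      (Finset.single_le_sum (f := fun j => (⟪a j, x - P x⟫ / ‖a j‖) ^ 2)
        (fun j _ => sq_nonneg _) (Finset.mem_univ i))
  -- positivity of constants
  have hsqm : (0:ℝ) < Real.sqrt m := Real.sqrt_pos.mpr hm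
  have hFpos : (0:ℝ) < ∑ i, ‖a i‖ ^ 2 :=
    Finset.sum_pos' (fun i _ => sq_nonneg _)
      ⟨i₀, Finset.mem_univ i₀, pow_pos (norm_pos_iff.mpr (ha i₀)) 2⟩
  have hsqF : (0:ℝ) < Real.sqrt (∑ i, ‖a i‖ ^ 2) := Real.sqrt_pos.mpr hFpos
  have hsupa : (0:ℝ) < ⨆ i, ‖a i‖ :=
    lt_of_lt_of_le (norm_pos_iff.mpr (ha i₀)) (le_ciSup hbdda i₀)
  -- package into sInf comparisons
  refine ⟨max_le (max_le ?_ ?_) ?_, ?_⟩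
  · apply sInf_div_le_sInf_aux Q _ _ _ hsqm hne
    · intro x _
      exact div_nonneg (Real.sqrt_nonneg _) (norm_nonneg _)
    · intro x hx
      rw [← mul_div_assoc]
      exact div_le_div_of_nonneg_right (key1 x) (hu x hx).le
  · apply sInf_div_le_sInf_aux Q _ _ _ hsqF hne
    · intro x _
      exact div_nonneg (Real.sqrt_nonneg _) (norm_nonneg _)
    · intro x hx
      rw [← mul_div_assoc]
      exact div_le_div_of_nonneg_right (key2 x) (hu x hx).le
  · apply sInf_div_le_sInf_aux Q _ _ _ hsupa hne
    · intro x _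
      exact div_nonneg (le_trans (abs_nonneg _) (le_ciSup (hbdd2 x) i₀)) (norm_nonneg _)
    · intro x hx
      rw [← mul_div_assoc]
      exact div_le_div_of_nonneg_right (key3 x) (hu x hx).le
  · have h := sInf_div_le_sInf_aux Q
      (fun x => (⨆ i, |⟪a i, x - P x⟫| / ‖a i‖) / ‖x - P x‖)
      (fun x => Real.sqrt (∑ i, (⟪a i, x - P x⟫ / ‖a i‖) ^ 2) / ‖x - P x‖)
      1 one_pos hne
      (fun x _ => div_nonneg (hs0 x) (norm_nonneg _))
      (fun x hx => by
        rw [one_mul]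
        exact div_le_div_of_nonneg_right (key4 x) (hu x hx).le)
    rwa [div_one] at h
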